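/- Let A ∈ C^{n×m} and D, E ∈ C^{m×n} be such that the (D,E)-inverse X of A exists. Then the following are equivalent: (i) AXA = A; (ii) rank(A) = rank(D); (iii) range(D) ⊕ ker(A) = C^m; (iv) range(A) ⊕ ker(E) = C^n. -/

import Mathlib

open Matrix Module Submodule

theorem stmt17 (n m : ℕ) (A : Matrix (Fin n) (Fin m) ℂ) (D E X : Matrix (Fin m) (Fin n) ℂ)
    (h1 : X * A * D = D) (h2 : E * A * X = E)
    (h3 : LinearMap.range X.mulVecLin ≤ LinearMap.range D.mulVecLin)
    (h4 : LinearMap.ker E.mulVecLin ≤ LinearMap.ker X.mulVecLin) :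
    (A * X * A = A ↔ A.rank = D.rank) ∧
    (A.rank = D.rank ↔
      IsCompl (LinearMap.range D.mulVecLin) (LinearMap.ker A.mulVecLin)) ∧
    (IsCompl (LinearMap.range D.mulVecLin) (LinearMap.ker A.mulVecLin) ↔
      IsCompl (LinearMap.range A.mulVecLin) (LinearMap.ker E.mulVecLin)) := by
  -- pointwise versions of h1, h2
  have hXAD : ∀ v, X.mulVecLin (A.mulVecLin (D.mulVecLin v)) = D.mulVecLin v := by
    intro v
    conv_rhs => rw [← h1]
    simp [Matrix.mulVecLin_mul]
  have hEAX : ∀ v, E.mulVecLin (A.mulVecLin (X.mulVecLin v)) = E.mulVecLin v := by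
    intro v
    conv_rhs => rw [← h2]
    simp [Matrix.mulVecLin_mul]
  -- range X = range D
  have hrXD : LinearMap.range X.mulVecLin = LinearMap.range D.mulVecLin := by
    refine le_antisymm h3 ?_
    rintro _ ⟨v, rfl⟩
    exact ⟨A.mulVecLin (D.mulVecLin v), hXAD v⟩
  -- ker X = ker E
  have hkXE : LinearMap.ker X.mulVecLin = LinearMap.ker E.mulVecLin := by
    refine le_antisymm ?_ h4
    intro v hv
    simp only [LinearMap.mem_ker] at hv ⊢
    rw [← hEAX v, hv, map_zero, map_zero]
  -- rank-nullity for the m×n matrices (domain ℂ^n)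
  have keyN : ∀ (M : Matrix (Fin m) (Fin n) ℂ),
      M.rank + finrank ℂ (LinearMap.ker M.mulVecLin) = n := by
    intro M
    rw [Matrix.rank, LinearMap.finrank_range_add_finrank_ker]
    simp
  have keyA : A.rank + finrank ℂ (LinearMap.ker A.mulVecLin) = m := by
    rw [Matrix.rank, LinearMap.finrank_range_add_finrank_ker]
    simp
  have hXDr : X.rank = D.rank := by rw [Matrix.rank, Matrix.rank, hrXD]
  have hEDr : E.rank = D.rank := by
    have h5 := keyN E
    have h6 := keyN X
    rw [hkXE] at h6
    omega
  -- range D ⊓ ker A = ⊥  (always)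
  have hdisj : LinearMap.range D.mulVecLin ⊓ LinearMap.ker A.mulVecLin = ⊥ := by
    rw [Submodule.eq_bot_iff]
    rintro x ⟨⟨v, rfl⟩, hx⟩
    have hx' : A.mulVecLin (D.mulVecLin v) = 0 := hx
    rw [← hXAD v, hx', map_zero]
  -- range A ⊔ ker E = ⊤  (always)
  have hsup : LinearMap.range A.mulVecLin ⊔ LinearMap.ker E.mulVecLin = ⊤ := by
    rw [Submodule.eq_top_iff']
    intro v
    refine Submodule.mem_sup.2 ⟨A.mulVecLin (X.mulVecLin v), ⟨_, rfl⟩,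
      v - A.mulVecLin (X.mulVecLin v), ?_, by abel⟩
    simp only [LinearMap.mem_ker, map_sub, hEAX v, sub_self]
  have rAd : A.rank = finrank ℂ (LinearMap.range A.mulVecLin) := rfl
  have rDd : D.rank = finrank ℂ (LinearMap.range D.mulVecLin) := rfl
  have rEd : E.rank = finrank ℂ (LinearMap.range E.mulVecLin) := rfl
  -- (ii) ↔ (iii)
  have e23 : A.rank = D.rank ↔
      IsCompl (LinearMap.range D.mulVecLin) (LinearMap.ker A.mulVecLin) := by
    constructor
    · intro h
      refine ⟨disjoint_iff.2 hdisj, codisjoint_iff.2 ?_⟩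
      apply Submodule.eq_top_of_finrank_eq
      have h7 := Submodule.finrank_sup_add_finrank_inf_eq
        (LinearMap.range D.mulVecLin) (LinearMap.ker A.mulVecLin)
      rw [hdisj, finrank_bot] at h7
      have h8 : finrank ℂ (Fin m → ℂ) = m := by simp
      omega
    · intro h
      have h7 := Submodule.finrank_sup_add_finrank_inf_eq
        (LinearMap.range D.mulVecLin) (LinearMap.ker A.mulVecLin)
      rw [h.disjoint.eq_bot, finrank_bot, codisjoint_iff.1 h.codisjoint] at h7
      have h8 : finrank ℂ (⊤ : Submodule ℂ (Fin m → ℂ)) = m := by simp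
      omega
  -- (ii) ↔ (iv)
  have e24 : A.rank = D.rank ↔
      IsCompl (LinearMap.range A.mulVecLin) (LinearMap.ker E.mulVecLin) := by
    have h7 := Submodule.finrank_sup_add_finrank_inf_eq
      (LinearMap.range A.mulVecLin) (LinearMap.ker E.mulVecLin)
    rw [hsup] at h7
    have h8 : finrank ℂ (⊤ : Submodule ℂ (Fin n → ℂ)) = n := by simp
    have h9 := keyN E
    constructor
    · intro h
      refine ⟨disjoint_iff.2 ?_, codisjoint_iff.2 hsup⟩
      rw [← Submodule.finrank_eq_zero (R := ℂ)]
      omega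
    · intro h
      have h10 := h.disjoint.eq_bot
      rw [h10, finrank_bot] at h7
      omega
  -- (ii) → (i)
  have i_of_2 : A.rank = D.rank → A * X * A = A := by
    intro h
    have hc := e23.1 h
    have htop := codisjoint_iff.1 hc.codisjoint
    ext i j
    have hv : ∀ v : Fin m → ℂ, (A * X * A).mulVecLin v = A.mulVecLin v := by
      intro v
      obtain ⟨d, hd, w, hw, rfl⟩ := Submodule.mem_sup.1 (htop ▸ Submodule.mem_top :
        v ∈ LinearMap.range D.mulVecLin ⊔ LinearMap.ker A.mulVecLin)
      obtain ⟨u, rfl⟩ := hd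
      simp only [LinearMap.mem_ker] at hw
      simp only [Matrix.mulVecLin_mul, LinearMap.comp_apply, map_add, map_zero, hw, add_zero,
        hXAD u]
    have := hv (Pi.single j 1)
    rw [Matrix.mulVecLin_apply, Matrix.mulVecLin_apply, Matrix.mulVec_single_one,
      Matrix.mulVec_single_one] at this
    exact congrFun this i
  -- (i) → (ii)
  have two_of_i : A * X * A = A → A.rank = D.rank := by
    intro h
    have hle : A.rank ≤ D.rank := by
      calc A.rank = (A * X * A).rank := by rw [h]
        _ ≤ (A * X).rank := Matrix.rank_mul_le_left _ _
        _ ≤ X.rank := Matrix.rank_mul_le_right _ _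
        _ = D.rank := hXDr
    have hge : D.rank ≤ A.rank := by
      calc D.rank = (X * (A * D)).rank := by rw [← Matrix.mul_assoc, h1]
        _ ≤ (A * D).rank := Matrix.rank_mul_le_right _ _
        _ ≤ A.rank := Matrix.rank_mul_le_left _ _
    exact le_antisymm hle hge
  exact ⟨⟨two_of_i, i_of_2⟩, e23, e23.symm.trans e24⟩
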